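/- For the kinetic equation ẋ_k = Σ_i x_i Q_{ik}(x) on the simplex Σ_d with Lipschitz Kolmogorov matrices Q(x): if the initial point x has x_k > 0 for some coordinate k, then the solution satisfies (X_x(t))_k > 0 for all t ≥ 0. -/

import Mathlib

open Real

lemma hasDerivAt_minsq (y : ℝ) :
    HasDerivAt (fun z : ℝ => (min z 0)^2) (2 * min y 0) y := by
  rcases lt_trichotomy y 0 with h | h | h
  · have he : (fun z : ℝ => (min z 0)^2) =ᶠ[nhds y] (fun z : ℝ => z^2) := by
      filter_upwards [Iio_mem_nhds h] with z hz
      rw [Set.mem_Iio] at hz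
      simp [min_eq_left hz.le]
    have := (hasDerivAt_pow 2 y).congr_of_eventuallyEq he
    simpa [min_eq_left h.le, mul_comm] using this
  · subst h
    have h0 : (2 : ℝ) * min 0 0 = 0 := by simp
    rw [h0, hasDerivAt_iff_tendsto_slope]
    have hb : ∀ z : ℝ, ‖slope (fun z : ℝ => (min z 0)^2) 0 z‖ ≤ |z| := by
      intro z
      rcases eq_or_ne z 0 with rfl | hz
      · simp [slope]
      · have h1 : (min z 0)^2 ≤ z^2 := by
          rcases min_cases z 0 with ⟨h, _⟩ | ⟨h, _⟩ <;> simp [h] <;> positivity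
        have h2 : slope (fun z : ℝ => (min z 0)^2) 0 z = (min z 0)^2 / z := by
          simp [slope, div_eq_inv_mul]
        rw [h2, Real.norm_eq_abs, abs_div]
        rw [div_le_iff₀ (abs_pos.mpr hz)]
        calc |(min z 0)^2| = (min z 0)^2 := abs_of_nonneg (sq_nonneg _)
          _ ≤ z^2 := h1
          _ = |z| * |z| := by rw [← abs_mul, sq, abs_of_nonneg (mul_self_nonneg z)]
    have habs : Filter.Tendsto (fun z : ℝ => |z|) (nhdsWithin 0 {(0:ℝ)}ᶜ) (nhds 0) :=
      Filter.Tendsto.mono_left (by simpa using continuous_abs.tendsto (0:ℝ)) nhdsWithin_le_nhds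
    exact squeeze_zero_norm hb habs
  · have he : (fun z : ℝ => (min z 0)^2) =ᶠ[nhds y] (fun _ : ℝ => (0:ℝ)) := by
      filter_upwards [Ioi_mem_nhds h] with z hz
      rw [Set.mem_Ioi] at hz
      simp [min_eq_right hz.le]
    have := (hasDerivAt_const y (0:ℝ)).congr_of_eventuallyEq he
    simpa [min_eq_right h.le] using this
theorem stmt8 {d : ℕ} (Q : (Fin d → ℝ) → Matrix (Fin d) (Fin d) ℝ) (K : NNReal)
    (hoff : ∀ x i j, i ≠ j → 0 ≤ Q x i j)
    (hrow : ∀ x i, ∑ j, Q x i j = 0)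
    (hlip : ∀ i j, LipschitzWith K (fun y => Q y i j))
    (x : ℝ → Fin d → ℝ)
    (hode : ∀ t, ∀ k, HasDerivAt (fun s => x s k) (∑ i, x t i * Q (x t) i k) t)
    (hinit : (∀ j, 0 ≤ x 0 j) ∧ ∑ j, x 0 j = 1)
    (k : Fin d) (hk : 0 < x 0 k) :
    ∀ t ≥ (0:ℝ), 0 < x t k := by
  intro t ht
  -- continuity of coordinates
  have hxc : ∀ j, Continuous fun s => x s j := by
    intro j
    exact continuous_iff_continuousAt.2 fun s => (hode s j).continuousAt
  have hxcont : Continuous x := continuous_pi hxc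
  have hQc : ∀ i j, Continuous fun s => Q (x s) i j := fun i j =>
    ((hlip i j).continuous).comp hxcont
  -- uniform bound on Q entries along the trajectory on [0, t]
  obtain ⟨M, hM0, hM⟩ : ∃ M : ℝ, 0 ≤ M ∧ ∀ s ∈ Set.Icc (0:ℝ) t, ∀ i j, |Q (x s) i j| ≤ M := by
    have hgc : ContinuousOn (fun s => ∑ i, ∑ j, |Q (x s) i j|) (Set.Icc (0:ℝ) t) := by
      apply Continuous.continuousOn
      exact continuous_finset_sum _ fun i _ => continuous_finset_sum _ fun j _ => (hQc i j).abs
    obtain ⟨C, hC⟩ := (isCompact_Icc).exists_bound_of_continuousOn hgc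
    refine ⟨max C 0, le_max_right _ _, fun s hs i j => ?_⟩
    have h1 : |Q (x s) i j| ≤ ∑ i, ∑ j, |Q (x s) i j| := by
      calc |Q (x s) i j| ≤ ∑ j, |Q (x s) i j| :=
            Finset.single_le_sum (f := fun j => |Q (x s) i j|)
              (fun j _ => abs_nonneg _) (Finset.mem_univ j)
        _ ≤ ∑ i, ∑ j, |Q (x s) i j| :=
            Finset.single_le_sum (f := fun i => ∑ j, |Q (x s) i j|)
              (fun i _ => Finset.sum_nonneg fun j _ => abs_nonneg _) (Finset.mem_univ i)
    have h2 := hC s hs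
    rw [Real.norm_eq_abs] at h2
    have h3 : ∑ i, ∑ j, |Q (x s) i j| ≤ C := le_of_abs_le h2
    exact h1.trans (h3.trans (le_max_left _ _))
  set C : ℝ := 2 * M * d with hC_def
  -- all coordinates stay nonnegative on [0, t]
  have key : ∀ s ∈ Set.Icc (0:ℝ) t, ∀ j, 0 ≤ x s j := by
    set u : ℝ → ℝ := fun s => ∑ j, (min (x s j) 0)^2 with hu_def
    have hu' : ∀ s, HasDerivAt u
        (∑ j, 2 * min (x s j) 0 * (∑ i, x s i * Q (x s) i j)) s := by
      intro s
      exact HasDerivAt.fun_sum fun j _ => by have := (hasDerivAt_minsq (x s j)).comp s (hode s j); exact this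
    have hunn : ∀ s, 0 ≤ u s := fun s => Finset.sum_nonneg fun j _ => sq_nonneg _
    have hub : ∀ s ∈ Set.Icc (0:ℝ) t,
        (∑ j, 2 * min (x s j) 0 * (∑ i, x s i * Q (x s) i j)) ≤ C * u s := by
      intro s hs
      have hmain : ∀ j i, 2 * min (x s j) 0 * (x s i * Q (x s) i j) ≤
          M * ((min (x s j) 0)^2 + (min (x s i) 0)^2) := by
        intro j i
        set mj := min (x s j) 0 with hmj_def
        set mi := min (x s i) 0 with hmi_def
        have hmj : mj ≤ 0 := min_le_right _ _
        have hmi : mi ≤ 0 := min_le_right _ _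
        have hmjx : mj ≤ x s j := min_le_left _ _
        have hmix : mi ≤ x s i := min_le_left _ _
        have hQM : Q (x s) i j ≤ M := le_of_abs_le (hM s hs i j)
        have hQM' : -M ≤ Q (x s) i j := neg_le_of_abs_le (hM s hs i j)
        rcases eq_or_ne i j with rfl | hij
        · -- diagonal: mj * x = mj^2
          have hmx : mj * x s i = mj^2 := by
            rcases min_cases (x s i) 0 with ⟨h, _⟩ | ⟨h, _⟩
            · rw [hmj_def, h]; ring
            · rw [hmj_def, h]; ring
          have : 2 * mj * (x s i * Q (x s) i i) = 2 * mj^2 * Q (x s) i i := by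
            rw [← hmx]; ring
          rw [this]
          nlinarith [sq_nonneg mj, hQM, hQM']
        · have hQ0 : 0 ≤ Q (x s) i j := hoff _ i j hij
          have h1 : mj * (x s i * Q (x s) i j) ≤ mj * (mi * Q (x s) i j) :=
            mul_le_mul_of_nonpos_left (mul_le_mul_of_nonneg_right hmix hQ0) hmj
          have hmm : 0 ≤ mj * mi := by nlinarith [mul_nonneg (neg_nonneg.2 hmj) (neg_nonneg.2 hmi)]
          have h2 : mj * (mi * Q (x s) i j) ≤ mj * mi * M := by
            calc mj * (mi * Q (x s) i j) = (mj * mi) * Q (x s) i j := by ring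
              _ ≤ (mj * mi) * M := mul_le_mul_of_nonneg_left hQM hmm
          have h3 : 2 * (mj * mi) ≤ mj^2 + mi^2 := by nlinarith [two_mul_le_add_sq mj mi]
          nlinarith [mul_le_mul_of_nonneg_left h3 hM0]
      calc ∑ j, 2 * min (x s j) 0 * (∑ i, x s i * Q (x s) i j)
          = ∑ j, ∑ i, 2 * min (x s j) 0 * (x s i * Q (x s) i j) := by
            simp [Finset.mul_sum]
        _ ≤ ∑ j, ∑ i, M * ((min (x s j) 0)^2 + (min (x s i) 0)^2) :=
            Finset.sum_le_sum fun j _ => Finset.sum_le_sum fun i _ => hmain j i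
        _ = C * u s := by
            simp only [mul_add, Finset.sum_add_distrib, Finset.mul_sum,
              Finset.sum_const, Finset.card_univ, Fintype.card_fin, nsmul_eq_mul, hu_def,
              hC_def]
            rw [← Finset.sum_add_distrib]
            exact Finset.sum_congr rfl fun j _ => by ring
    -- v = u * exp(-C s) is antitone on [0, t]
    set v : ℝ → ℝ := fun s => u s * Real.exp (-(C * s)) with hv_def
    have hv' : ∀ s, HasDerivAt v
        ((∑ j, 2 * min (x s j) 0 * (∑ i, x s i * Q (x s) i j)) * Real.exp (-(C * s))
          + u s * (Real.exp (-(C * s)) * -(C * 1))) s := by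
      intro s
      have he : HasDerivAt (fun s : ℝ => Real.exp (-(C * s)))
          (Real.exp (-(C * s)) * -(C * 1)) s :=
        (((hasDerivAt_id s).const_mul C).neg).exp
      exact (hu' s).mul he
    have hvanti : AntitoneOn v (Set.Icc 0 t) := by
      apply antitoneOn_of_deriv_nonpos (convex_Icc 0 t)
      · exact Continuous.continuousOn (continuous_iff_continuousAt.2 fun s => (hv' s).continuousAt)
      · intro s _
        exact (hv' s).differentiableAt.differentiableWithinAt
      · intro s hs
        rw [interior_Icc] at hs
        rw [(hv' s).deriv]
        have hsIcc : s ∈ Set.Icc (0:ℝ) t := ⟨hs.1.le, hs.2.le⟩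
        have h1 := hub s hsIcc
        have h2 := Real.exp_pos (-(C * s))
        have h3 := hunn s
        nlinarith
    intro s hs j
    have hv0 : v 0 = 0 := by
      have : u 0 = 0 := by
        apply Finset.sum_eq_zero
        intro j _
        rw [min_eq_right (hinit.1 j), zero_pow]
        norm_num
      simp [hv_def, this]
    have hvs : v s ≤ 0 := by
      have := hvanti (Set.left_mem_Icc.2 ht) hs hs.1
      rw [hv0] at this
      exact this
    have hus : u s = 0 := by
      have h1 : u s * Real.exp (-(C * s)) ≤ 0 := hvs
      have h2 := Real.exp_pos (-(C * s))
      nlinarith [hunn s]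
    have : (min (x s j) 0)^2 = 0 := by
      have := (Finset.sum_eq_zero_iff_of_nonneg (fun j _ => sq_nonneg (min (x s j) 0))).1 hus
      exact this j (Finset.mem_univ j)
    have hmin0 : min (x s j) 0 = 0 := by
      exact pow_eq_zero_iff (by norm_num) |>.1 this
    exact min_eq_right_iff.1 hmin0
  -- strict positivity of coordinate k
  set w : ℝ → ℝ := fun s => x s k * Real.exp (M * s) with hw_def
  have hw' : ∀ s, HasDerivAt w
      ((∑ i, x s i * Q (x s) i k) * Real.exp (M * s)
        + x s k * (Real.exp (M * s) * (M * 1))) s := by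
    intro s
    have he : HasDerivAt (fun s : ℝ => Real.exp (M * s)) (Real.exp (M * s) * (M * 1)) s :=
      ((hasDerivAt_id s).const_mul M).exp
    exact (hode s k).mul he
  have hwmono : MonotoneOn w (Set.Icc 0 t) := by
    apply monotoneOn_of_deriv_nonneg (convex_Icc 0 t)
    · exact Continuous.continuousOn (continuous_iff_continuousAt.2 fun s => (hw' s).continuousAt)
    · intro s _
      exact (hw' s).differentiableAt.differentiableWithinAt
    · intro s hs
      rw [interior_Icc] at hs
      rw [(hw' s).deriv]
      have hsIcc : s ∈ Set.Icc (0:ℝ) t := ⟨hs.1.le, hs.2.le⟩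
      have hxk : 0 ≤ x s k := key s hsIcc k
      have hsum : -(M * x s k) ≤ ∑ i, x s i * Q (x s) i k := by
        have hsplit : ∑ i, x s i * Q (x s) i k
            = x s k * Q (x s) k k + ∑ i ∈ Finset.univ.erase k, x s i * Q (x s) i k :=
          (Finset.add_sum_erase Finset.univ (fun i => x s i * Q (x s) i k)
            (Finset.mem_univ k)).symm
        have hrest : 0 ≤ ∑ i ∈ Finset.univ.erase k, x s i * Q (x s) i k := by
          apply Finset.sum_nonneg
          intro i hi
          exact mul_nonneg (key s hsIcc i) (hoff _ i k (Finset.ne_of_mem_erase hi))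
        have hdiag : -(M * x s k) ≤ x s k * Q (x s) k k := by
          have h1 : -M ≤ Q (x s) k k := neg_le_of_abs_le (hM s hsIcc k k)
          nlinarith
        rw [hsplit]; linarith
      have h2 := Real.exp_pos (M * s)
      nlinarith
  have h0t : w 0 ≤ w t := hwmono (Set.left_mem_Icc.2 ht) (Set.right_mem_Icc.2 ht) ht
  have hw0 : w 0 = x 0 k := by simp [hw_def]
  rw [hw0] at h0t
  have hwt : w t = x t k * Real.exp (M * t) := rfl
  rw [hwt] at h0t
  have h2 := Real.exp_pos (M * t)
  nlinarith [h0t, hk]
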